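/- Let X be a topological space, (Y, d) a compact metric space, D ⊆ X, f : D → Y, and x ∈ closure(D). Then the oscillation of f at x, ω_f(x) = inf_{U ∈ 𝒰_x} diam f(U ∩ D), is equal to the diameter of the cluster set f̄(x). -/

import Mathlib

open Set

/-- The cluster set of a function `f : D → Z` (for `D ⊆ X`) at a point `x ∈ X`:
the intersection over all neighborhoods `U` of `x` of the closures of `f (U ∩ D)`. -/
def clusterSet {X Z : Type*} [TopologicalSpace X] [TopologicalSpace Z] {D : Set X}
    (f : D → Z) (x : X) : Set Z :=
  ⋂ U ∈ nhds x, closure (f '' {d : D | (d : X) ∈ U})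

/-- Let `X` be a topological space, `(Y, d)` a compact metric space,
`D ⊆ X`, `f : D → Y` and `x ∈ closure D`. Then the oscillation of `f` at `x`, namely
the infimum over neighborhoods `U` of `x` of the diameters of `f (U ∩ D)`, equals the
diameter of the cluster set of `f` at `x`. -/
theorem oscillation_eq_diam_clusterSet {X Y : Type*} [TopologicalSpace X]
    [MetricSpace Y] [CompactSpace Y] (D : Set X) (f : D → Y) (x : X)
    (hx : x ∈ closure D) :
    sInf {r : ℝ | ∃ U ∈ nhds x, r = Metric.diam (f '' {d : D | (d : X) ∈ U})}
      = Metric.diam (clusterSet f x) := by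
  set K := clusterSet f x with hK
  have hKsub : ∀ U ∈ nhds x, K ⊆ closure (f '' {d : D | (d : X) ∈ U}) := by
    intro U hU
    exact Set.biInter_subset_of_mem hU
  set S := {r : ℝ | ∃ U ∈ nhds x, r = Metric.diam (f '' {d : D | (d : X) ∈ U})} with hS
  have hS_ne : S.Nonempty := ⟨_, Set.univ, Filter.univ_mem, rfl⟩
  have hbdd : BddBelow S := by
    refine ⟨0, ?_⟩
    rintro r ⟨U, hU, rfl⟩
    exact Metric.diam_nonneg
  have hbK : Bornology.IsBounded K := isCompact_univ.isBounded.subset (Set.subset_univ _)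
  apply le_antisymm
  · apply le_of_forall_pos_le_add
    intro ε hε
    set O := Metric.thickening (ε / 2) K with hO
    have hOopen : IsOpen O := Metric.isOpen_thickening
    have hempty : (Set.univ : Set Y) ∩
        ⋂ U : {U : Set X // U ∈ nhds x},
          (closure (f '' {d : D | (d : X) ∈ U.1}) ∩ Oᶜ) = ∅ := by
      rw [Set.univ_inter]
      apply Set.eq_empty_iff_forall_notMem.2
      intro y hy
      simp only [Set.mem_iInter, Set.mem_inter_iff] at hy
      have hyK : y ∈ K := by
        rw [hK]
        exact Set.mem_iInter₂.2 fun U hU => (hy ⟨U, hU⟩).1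
      exact (hy ⟨Set.univ, Filter.univ_mem⟩).2
        (Metric.self_subset_thickening (by positivity) K hyK)
    obtain ⟨t, ht⟩ := isCompact_univ.elim_finite_subfamily_closed _
      (fun U : {U : Set X // U ∈ nhds x} =>
        (isClosed_closure.inter hOopen.isClosed_compl)) hempty
    set U0 : Set X := ⋂ i ∈ t, (i : {U : Set X // U ∈ nhds x}).1 with hU0def
    have hU0 : U0 ∈ nhds x := (Filter.biInter_finset_mem t).2 fun i _ => i.2
    have hsubO : closure (f '' {d : D | (d : X) ∈ U0}) ⊆ O := by
      intro y hy
      by_contra hyO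
      have : y ∈ (Set.univ : Set Y) ∩
          ⋂ i ∈ t, (closure (f '' {d : D | (d : X) ∈ (i : {U : Set X // U ∈ nhds x}).1}) ∩ Oᶜ) := by
        refine ⟨Set.mem_univ _, Set.mem_iInter₂.2 fun i hi => ⟨?_, hyO⟩⟩
        refine closure_mono (Set.image_mono ?_) hy
        intro d hd
        exact Set.mem_iInter₂.1 hd i hi
      rw [ht] at this
      exact this
    have hdiam : Metric.diam (f '' {d : D | (d : X) ∈ U0}) ≤ Metric.diam K + ε := by
      apply Metric.diam_le_of_forall_dist_le (by positivity)
      intro y hy z hz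
      obtain ⟨a, haK, hay⟩ := Metric.mem_thickening_iff.1 (hsubO (subset_closure hy))
      obtain ⟨b, hbKmem, hbz⟩ := Metric.mem_thickening_iff.1 (hsubO (subset_closure hz))
      have hab : dist a b ≤ Metric.diam K := Metric.dist_le_diam_of_mem hbK haK hbKmem
      calc dist y z ≤ dist y a + dist a b + dist b z := dist_triangle4 y a b z
        _ ≤ ε / 2 + Metric.diam K + ε / 2 := by
            gcongr <;> first | exact hay.le | exact (dist_comm b z ▸ hbz.le)
        _ = Metric.diam K + ε := by ring
    calc sInf S ≤ Metric.diam (f '' {d : D | (d : X) ∈ U0}) :=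
          csInf_le hbdd ⟨U0, hU0, rfl⟩
      _ ≤ Metric.diam K + ε := hdiam
  · apply le_csInf hS_ne
    rintro r ⟨U, hU, rfl⟩
    calc Metric.diam K ≤ Metric.diam (closure (f '' {d : D | (d : X) ∈ U})) :=
          Metric.diam_mono (hKsub U hU) (isCompact_univ.isBounded.subset (Set.subset_univ _))
      _ = Metric.diam (f '' {d : D | (d : X) ∈ U}) := Metric.diam_closure _
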